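/- arXiv:2111.08522 — 3 statements merged into one kernel-verified Lean document; each statement's English description precedes it below -/
import Mathlib

section
/- Let g : [0,T] → ℂ solve ∂_t g(t) = (1/N) ∑_{j=1}^N 2/(g(t) − λ_j(t)) with λ_j : [0,T] → ℝ continuous, and suppose Im g(t) ≥ δ₁ > 0 for all t ∈ [0,T]. Then for each j and all t ∈ [0,T], ∫_0^t 2/|g(s) − λ_j(s)|² ds ≤ N · log(Im g(0)/Im g(t)) ≤ N · log(Im g(0)/δ₁). -/
open MeasureTheory Set

theorem stmt3 (T : ℝ) (hT : 0 < T) (N : ℕ) (hN : 1 ≤ N)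
    (lam : Fin N → ℝ → ℝ) (hlam : ∀ j, ContinuousOn (lam j) (Icc 0 T))
    (g : ℝ → ℂ) (δ₁ : ℝ) (hδ₁ : 0 < δ₁)
    (hIm : ∀ t ∈ Icc (0:ℝ) T, δ₁ ≤ (g t).im)
    (hg : ∀ t ∈ Icc (0:ℝ) T,
      HasDerivAt g ((1 / (N:ℂ)) * ∑ j, 2 / (g t - (lam j t : ℂ))) t) :
    ∀ j, ∀ t ∈ Icc (0:ℝ) T,
      (∫ s in (0:ℝ)..t, 2 / ‖g s - (lam j s : ℂ)‖ ^ 2)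
          ≤ (N:ℝ) * Real.log ((g 0).im / (g t).im)
      ∧ (N:ℝ) * Real.log ((g 0).im / (g t).im) ≤ (N:ℝ) * Real.log ((g 0).im / δ₁) := by
  have hNpos : (0:ℝ) < N := by exact_mod_cast Nat.lt_of_lt_of_le Nat.zero_lt_one hN
  -- basic positivity
  have hpos : ∀ s ∈ Icc (0:ℝ) T, 0 < (g s).im := fun s hs => lt_of_lt_of_le hδ₁ (hIm s hs)
  -- the functions F j
  set F : Fin N → ℝ → ℝ := fun j s => 2 / ‖g s - (lam j s : ℂ)‖ ^ 2 with hF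
  have habs : ∀ s ∈ Icc (0:ℝ) T, ∀ j : Fin N,
      0 < ‖g s - (lam j s : ℂ)‖ := by
    intro s hs j
    have h1 : |(g s - (lam j s : ℂ)).im| ≤ ‖g s - (lam j s : ℂ)‖ :=
      Complex.abs_im_le_norm _
    have h2 : (g s - (lam j s : ℂ)).im = (g s).im := by simp
    have := hpos s hs
    calc (0:ℝ) < (g s).im := this
      _ ≤ |(g s - (lam j s : ℂ)).im| := by rw [h2]; exact le_abs_self _
      _ ≤ _ := h1
  have hgc : ContinuousOn g (Icc 0 T) := fun s hs =>
    (hg s hs).continuousAt.continuousWithinAt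
  have hFc : ∀ j, ContinuousOn (F j) (Icc 0 T) := by
    intro j
    apply ContinuousOn.div continuousOn_const
    · exact ((continuous_norm.comp_continuousOn
        (hgc.sub ((Complex.continuous_ofReal.comp_continuousOn (hlam j))))).pow 2)
    · intro s hs
      exact pow_ne_zero 2 (ne_of_gt (habs s hs j))
  have hFnn : ∀ j, ∀ s ∈ Icc (0:ℝ) T, 0 ≤ F j s := by
    intro j s hs
    exact div_nonneg (by norm_num) (by positivity)
  -- derivative of log ∘ Im g
  have hlog : ∀ s ∈ Icc (0:ℝ) T,
      HasDerivAt (fun u => Real.log (g u).im) (-((1/(N:ℝ)) * ∑ j, F j s)) s := by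
    intro s hs
    have hIm' : HasDerivAt (fun u => (g u).im)
        (((1 / (N:ℂ)) * ∑ j, 2 / (g s - (lam j s : ℂ))).im) s :=
      Complex.imCLM.hasFDerivAt.comp_hasDerivAt s (hg s hs)
    have hne : (g s).im ≠ 0 := ne_of_gt (hpos s hs)
    have := hIm'.log hne
    convert this using 1
    have hcast : (1 / (N:ℂ)) = (((N:ℝ)⁻¹ : ℝ) : ℂ) := by push_cast; rw [one_div]
    rw [hcast, Complex.im_ofReal_mul, Complex.im_sum]
    have hterm : ∀ j : Fin N, (2 / (g s - (lam j s : ℂ))).im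
        = -((g s).im * F j s) := by
      intro j
      have hz : Complex.normSq (g s - (lam j s : ℂ)) ≠ 0 := by
        rw [← Complex.sq_norm]; exact pow_ne_zero 2 (ne_of_gt (habs s hs j))
      rw [Complex.div_im]
      simp only [hF, ← Complex.sq_norm]
      have h2 : (g s - (lam j s : ℂ)).im = (g s).im := by simp
      rw [h2]
      field_simp
      rw [Complex.re_ofNat, Complex.im_ofNat]
      ring
    rw [Finset.sum_congr rfl (fun j _ => hterm j)]
    rw [Finset.sum_neg_distrib]
    field_simp
    rw [← Finset.mul_sum]
    ring
  intro j t ht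
  obtain ⟨ht0, htT⟩ := ht
  have hsub : Icc (0:ℝ) t ⊆ Icc 0 T := Icc_subset_Icc le_rfl htT
  -- FTC
  have hInt : ∀ k : Fin N, IntervalIntegrable (F k) volume 0 t := by
    intro k
    apply ContinuousOn.intervalIntegrable
    rw [uIcc_of_le ht0]
    exact (hFc k).mono hsub
  have hIntSum : IntervalIntegrable (fun s => -((1/(N:ℝ)) * ∑ k, F k s)) volume 0 t := by
    apply ContinuousOn.intervalIntegrable
    rw [uIcc_of_le ht0]
    apply ContinuousOn.neg
    apply ContinuousOn.mul continuousOn_const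
    exact continuousOn_finset_sum _ (fun k _ => (hFc k).mono hsub)
  have hFTC : (∫ s in (0:ℝ)..t, -((1/(N:ℝ)) * ∑ k, F k s))
      = Real.log (g t).im - Real.log (g 0).im := by
    apply intervalIntegral.integral_eq_sub_of_hasDerivAt
    · intro s hsm
      rw [uIcc_of_le ht0] at hsm
      exact hlog s (hsub hsm)
    · exact hIntSum
  -- rearrange
  have h0T : (0:ℝ) ∈ Icc (0:ℝ) T := ⟨le_rfl, le_of_lt hT⟩
  have htT' : t ∈ Icc (0:ℝ) T := ⟨ht0, htT⟩
  have hsumval : (∫ s in (0:ℝ)..t, ∑ k, F k s)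
      = (N:ℝ) * Real.log ((g 0).im / (g t).im) := by
    have h1 : (∫ s in (0:ℝ)..t, -((1/(N:ℝ)) * ∑ k, F k s))
        = -((1/(N:ℝ)) * ∫ s in (0:ℝ)..t, ∑ k, F k s) := by
      rw [intervalIntegral.integral_neg, intervalIntegral.integral_const_mul]
    rw [h1] at hFTC
    have h2 : (1/(N:ℝ)) * (∫ s in (0:ℝ)..t, ∑ k, F k s)
        = Real.log (g 0).im - Real.log (g t).im := by linarith
    rw [Real.log_div (ne_of_gt (hpos 0 h0T)) (ne_of_gt (hpos t htT'))]
    have hNne : (N:ℝ) ≠ 0 := ne_of_gt hNpos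
    field_simp at h2 ⊢
    linarith
  constructor
  · -- first inequality
    have hmono : (∫ s in (0:ℝ)..t, F j s) ≤ ∫ s in (0:ℝ)..t, ∑ k, F k s := by
      apply intervalIntegral.integral_mono_on ht0 (hInt j)
      · apply ContinuousOn.intervalIntegrable
        rw [uIcc_of_le ht0]
        exact continuousOn_finset_sum _ (fun k _ => (hFc k).mono hsub)
      · intro s hs
        exact Finset.single_le_sum (fun k _ => hFnn k s (hsub hs)) (Finset.mem_univ j)
    rw [← hsumval]
    exact hmono
  · -- second inequality
    apply mul_le_mul_of_nonneg_left _ (le_of_lt hNpos)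
    apply Real.log_le_log
    · exact div_pos (hpos 0 h0T) (hpos t htT')
    · apply div_le_div_of_nonneg_left (le_of_lt (hpos 0 h0T)) hδ₁ (hIm t htT')
end

section
/- Let X, X* : [0,T] → ℝ be positive continuous functions satisfying X(t) = a + (4/κ) ∫_0^t ds/X(s) + W(t) and X*(t) = a + (4/κ*) ∫_0^t ds/X*(s) + W(t) for the same continuous function W with W(0) = 0, where 0 < κ ≤ κ* and a > 0. Then for all t ∈ [0,T], sup_{0 ≤ s ≤ t} (X*(s) − X(s))² ≤ (4t/κ²)(κ* − κ). -/
open MeasureTheory Set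

private lemma key_ineq (κ κ' x y : ℝ) (hκ : 0 < κ) (hκκ' : κ ≤ κ') (hx : 0 < x) (hy : 0 < y) :
    2 * (x - y) * (4 / (κ * x) - 4 / (κ' * y)) ≤ 4 * (κ' - κ) / κ ^ 2 := by
  have hκ' : 0 < κ' := hκ.trans_le hκκ'
  have hrw : 2 * (x - y) * (4 / (κ * x) - 4 / (κ' * y))
      = (8 * (x - y) * (κ' * y - κ * x)) / (κ * κ' * x * y) := by
    field_simp
    ring
  rw [hrw, div_le_div_iff₀ (by positivity) (by positivity)]
  have hk : 0 ≤ κ' - κ := sub_nonneg.2 hκκ'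
  rcases le_total y (2 * x) with h | h
  · have h1 : 0 ≤ 4 * κ * (y * (κ' * x + κ * y - 2 * κ * x) ^ 2) := by positivity
    have h2 : 0 ≤ 4 * κ * (κ * (κ' - κ) * x ^ 2 * y) := by positivity
    have h3 : 0 ≤ 4 * κ * (κ ^ 2 * (y - x) ^ 2 * (2 * x - y)) := by
      have : 0 ≤ 2 * x - y := by linarith
      positivity
    nlinarith [h1, h2, h3, hx, mul_pos hx hy]
  · have h1 : 0 ≤ 4 * κ * ((κ' - κ) ^ 2 * x ^ 2 * y) := by positivity
    have h2 : 0 ≤ 4 * κ * ((κ' - κ) * κ * x * y * (2 * y - x)) := by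
      have : 0 ≤ 2 * y - x := by linarith
      positivity
    have h3 : 0 ≤ 4 * κ * (2 * κ ^ 2 * x * (y - x) ^ 2) := by positivity
    nlinarith [h1, h2, h3, hx, mul_pos hx hy]

theorem stmt7 (T a κ κ' : ℝ) (hT : 0 < T) (ha : 0 < a)
    (hκ : 0 < κ) (hκκ' : κ ≤ κ') (hκ'4 : κ' ≤ 4)
    (W X Xs : ℝ → ℝ) (hW : ContinuousOn W (Icc 0 T)) (hW0 : W 0 = 0)
    (hXc : ContinuousOn X (Icc 0 T)) (hXsc : ContinuousOn Xs (Icc 0 T))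
    (hXpos : ∀ t ∈ Icc (0:ℝ) T, 0 < X t) (hXspos : ∀ t ∈ Icc (0:ℝ) T, 0 < Xs t)
    (hX : ∀ t ∈ Icc (0:ℝ) T, X t = a + (4 / κ) * (∫ s in (0:ℝ)..t, 1 / X s) + W t)
    (hXs : ∀ t ∈ Icc (0:ℝ) T, Xs t = a + (4 / κ') * (∫ s in (0:ℝ)..t, 1 / Xs s) + W t) :
    ∀ t ∈ Icc (0:ℝ) T, ∀ s ∈ Icc (0:ℝ) t,
      (Xs s - X s) ^ 2 ≤ (4 * t / κ ^ 2) * (κ' - κ) := by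
  have hκ' : 0 < κ' := hκ.trans_le hκκ'
  set C : ℝ := 4 * (κ' - κ) / κ ^ 2 with hC
  have hCnn : 0 ≤ C := by
    have : 0 ≤ κ' - κ := sub_nonneg.2 hκκ'
    positivity
  set g : ℝ → ℝ := fun r => C * r - (X r - Xs r) ^ 2 with hg
  -- continuity of integrands
  have hXinv : ContinuousOn (fun s => 1 / X s) (Icc 0 T) :=
    continuousOn_const.div hXc fun s hs => (hXpos s hs).ne'
  have hXsinv : ContinuousOn (fun s => 1 / Xs s) (Icc 0 T) :=
    continuousOn_const.div hXsc fun s hs => (hXspos s hs).ne'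
  -- derivative of the difference at interior points
  have hu : ∀ x ∈ Ioo (0:ℝ) T,
      HasDerivAt (fun r => X r - Xs r) (4 / (κ * X x) - 4 / (κ' * Xs x)) x := by
    intro x hx
    have hxI : x ∈ Icc (0:ℝ) T := Ioo_subset_Icc_self hx
    have hIoo : Ioo (0:ℝ) T ∈ nhds x := Ioo_mem_nhds hx.1 hx.2
    have hd1 : HasDerivAt (fun r => ∫ s in (0:ℝ)..r, 1 / X s) (1 / X x) x := by
      refine intervalIntegral.integral_hasDerivAt_right ?_ ?_ ?_
      · apply (hXinv.mono ?_).intervalIntegrable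
        rw [uIcc_of_le hxI.1]
        exact Icc_subset_Icc le_rfl hxI.2
      · exact (hXinv.mono Ioo_subset_Icc_self).stronglyMeasurableAtFilter isOpen_Ioo x hx
      · exact (hXinv.mono Ioo_subset_Icc_self).continuousAt hIoo
    have hd2 : HasDerivAt (fun r => ∫ s in (0:ℝ)..r, 1 / Xs s) (1 / Xs x) x := by
      refine intervalIntegral.integral_hasDerivAt_right ?_ ?_ ?_
      · apply (hXsinv.mono ?_).intervalIntegrable
        rw [uIcc_of_le hxI.1]
        exact Icc_subset_Icc le_rfl hxI.2
      · exact (hXsinv.mono Ioo_subset_Icc_self).stronglyMeasurableAtFilter isOpen_Ioo x hx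
      · exact (hXsinv.mono Ioo_subset_Icc_self).continuousAt hIoo
    have hF : HasDerivAt
        (fun r => (4 / κ) * (∫ s in (0:ℝ)..r, 1 / X s)
          - (4 / κ') * (∫ s in (0:ℝ)..r, 1 / Xs s))
        (4 / (κ * X x) - 4 / (κ' * Xs x)) x := by
      have := (hd1.const_mul (4 / κ)).sub (hd2.const_mul (4 / κ'))
      exact this.congr_deriv (by ring)
    refine hF.congr_of_eventuallyEq ?_
    filter_upwards [hIoo] with r hr
    have hrI : r ∈ Icc (0:ℝ) T := Ioo_subset_Icc_self hr
    rw [hX r hrI, hXs r hrI]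
    ring
  -- derivative of g at interior points
  have hgd : ∀ x ∈ Ioo (0:ℝ) T,
      HasDerivAt g (C - 2 * (X x - Xs x) * (4 / (κ * X x) - 4 / (κ' * Xs x))) x := by
    intro x hx
    have h1 : HasDerivAt (fun r => C * r) C x := by
      simpa using (hasDerivAt_id x).const_mul C
    have h2 : HasDerivAt (fun r => (X r - Xs r) ^ 2)
        (2 * (X x - Xs x) * (4 / (κ * X x) - 4 / (κ' * Xs x))) x := by
      have := (hu x hx).fun_pow 2
      exact this.congr_deriv (by norm_num)
    exact h1.sub h2
  -- g is monotone on [0, T]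
  have hmono : MonotoneOn g (Icc 0 T) := by
    refine monotoneOn_of_deriv_nonneg (convex_Icc 0 T) ?_ ?_ ?_
    · exact (continuousOn_const.mul continuousOn_id).sub ((hXc.sub hXsc).pow 2)
    · intro x hx
      rw [interior_Icc] at hx
      exact ((hgd x hx).differentiableAt).differentiableWithinAt
    · intro x hx
      rw [interior_Icc] at hx
      rw [(hgd x hx).deriv]
      have hxI : x ∈ Icc (0:ℝ) T := Ioo_subset_Icc_self hx
      have := key_ineq κ κ' (X x) (Xs x) hκ hκκ' (hXpos x hxI) (hXspos x hxI)
      linarith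
  -- initial condition
  have hX0 : X 0 = a := by
    have := hX 0 ⟨le_rfl, hT.le⟩
    simpa [intervalIntegral.integral_same, hW0] using this
  have hXs0 : Xs 0 = a := by
    have := hXs 0 ⟨le_rfl, hT.le⟩
    simpa [intervalIntegral.integral_same, hW0] using this
  have hg0 : g 0 = 0 := by simp [hg, hX0, hXs0]
  -- conclude
  intro t ht s hs
  have hsT : s ∈ Icc (0:ℝ) T := ⟨hs.1, hs.2.trans ht.2⟩
  have h0T : (0:ℝ) ∈ Icc (0:ℝ) T := ⟨le_rfl, hT.le⟩
  have := hmono h0T hsT hs.1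
  rw [hg0] at this
  have hsq : (Xs s - X s) ^ 2 = (X s - Xs s) ^ 2 := by ring
  have hCs : (X s - Xs s) ^ 2 ≤ C * s := by
    simp only [hg] at this; linarith
  have hCt : C * s ≤ C * t := mul_le_mul_of_nonneg_left hs.2 hCnn
  rw [hsq]
  calc (X s - Xs s) ^ 2 ≤ C * t := hCs.trans hCt
    _ = (4 * t / κ ^ 2) * (κ' - κ) := by rw [hC]; ring
end

section
/- Let 0 < κ < κ* and let a > 0, T > 0. Suppose X, X* : [0,T] → (0,∞) are continuous with running infima M(t) = inf_{s ≤ t} X(s) > 0 and M*(t) = inf_{s ≤ t} X*(s) > 0, sup_{s ≤ t}|X*(s) − X(s)| ≤ (2√t/κ)(κ*−κ)^{1/2}, and κ* X*(t) − κ X(t) = (κ*−κ)a + 4∫_0^t (X(s)−X*(s))/(X*(s)X(s)) ds + (κ*−κ)W(t) for a continuous W. Then |∫_0^t (κ* X*(s) − κ X(s))/(κ*κ · X*(s) X(s)) ds| · 2 ≤ (κ*−κ)·(2a/(κ*κ))·t/(M*(t)M(t)) + (κ*−κ)^{1/2}·(16/(κ*κ²))·t^{5/2}/((M*(t)M(t))²)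 + (κ*−κ)·(2/(κ*κ))·(t/(M*(t)M(t)))·sup_{0≤s≤t}|W(s)|. -/
open MeasureTheory Set

theorem stmt10 (T a κ κ' : ℝ) (hT : 0 < T) (ha : 0 < a)
    (hκ : 0 < κ) (hκκ' : κ < κ') (hκ'4 : κ' ≤ 4)
    (X Xs W : ℝ → ℝ)
    (hXc : ContinuousOn X (Icc 0 T)) (hXsc : ContinuousOn Xs (Icc 0 T))
    (hWc : ContinuousOn W (Icc 0 T)) (hW0 : W 0 = 0)
    (hXpos : ∀ t ∈ Icc (0:ℝ) T, 0 < X t) (hXspos : ∀ t ∈ Icc (0:ℝ) T, 0 < Xs t)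
    (M Ms : ℝ → ℝ)
    (hM : ∀ t ∈ Icc (0:ℝ) T, M t = sInf (X '' Icc 0 t))
    (hMs : ∀ t ∈ Icc (0:ℝ) T, Ms t = sInf (Xs '' Icc 0 t))
    (hMpos : ∀ t ∈ Icc (0:ℝ) T, 0 < M t) (hMspos : ∀ t ∈ Icc (0:ℝ) T, 0 < Ms t)
    (hsup : ∀ t ∈ Icc (0:ℝ) T, ∀ s ∈ Icc (0:ℝ) t,
      |Xs s - X s| ≤ (2 * Real.sqrt t / κ) * Real.sqrt (κ' - κ))
    (heq : ∀ t ∈ Icc (0:ℝ) T,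
      κ' * Xs t - κ * X t
        = (κ' - κ) * a + 4 * (∫ s in (0:ℝ)..t, (X s - Xs s) / (Xs s * X s))
          + (κ' - κ) * W t) :
    ∀ t ∈ Icc (0:ℝ) T,
      2 * |∫ s in (0:ℝ)..t, (κ' * Xs s - κ * X s) / (κ' * κ * (Xs s * X s))|
        ≤ (κ' - κ) * (2 * a / (κ' * κ)) * t / (Ms t * M t)
          + Real.sqrt (κ' - κ) * (16 / (κ' * κ ^ 2)) * (t ^ ((5:ℝ)/2)) / (Ms t * M t) ^ 2
          + (κ' - κ) * (2 / (κ' * κ)) * (t / (Ms t * M t)) *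
              sSup ((fun s => |W s|) '' Icc 0 t) := by
  intro t ht
  obtain ⟨ht0, htT⟩ := ht
  rcases eq_or_lt_of_le ht0 with h0 | htpos
  · subst h0
    simp [Real.zero_rpow (by norm_num : (5:ℝ)/2 ≠ 0)]
  have htt : t ∈ Icc (0:ℝ) T := ⟨ht0, htT⟩
  have hsub : Icc (0:ℝ) t ⊆ Icc 0 T := Icc_subset_Icc le_rfl htT
  have hd : 0 < κ' - κ := by linarith
  have hκ' : 0 < κ' := by linarith
  have hκκ : 0 < κ' * κ := mul_pos hκ' hκ
  set C := Ms t * M t with hCdef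
  have hMt := hMpos t htt
  have hMst := hMspos t htt
  have hC : 0 < C := mul_pos hMst hMt
  have hXc' : ContinuousOn X (Icc 0 t) := hXc.mono hsub
  have hXsc' : ContinuousOn Xs (Icc 0 t) := hXsc.mono hsub
  -- running infima bounds
  have hMle : ∀ s ∈ Icc (0:ℝ) t, M t ≤ X s := by
    intro s hs
    rw [hM t htt]
    exact csInf_le (isCompact_Icc.image_of_continuousOn hXc').bddBelow ⟨s, hs, rfl⟩
  have hMsle : ∀ s ∈ Icc (0:ℝ) t, Ms t ≤ Xs s := by
    intro s hs
    rw [hMs t htt]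
    exact csInf_le (isCompact_Icc.image_of_continuousOn hXsc').bddBelow ⟨s, hs, rfl⟩
  have hCle : ∀ s ∈ Icc (0:ℝ) t, C ≤ Xs s * X s := by
    intro s hs
    exact mul_le_mul (hMsle s hs) (hMle s hs) hMt.le (lt_of_lt_of_le hMst (hMsle s hs)).le
  have hXXpos : ∀ s ∈ Icc (0:ℝ) t, 0 < Xs s * X s := fun s hs => lt_of_lt_of_le hC (hCle s hs)
  -- sup of |W|
  set S := sSup ((fun s => |W s|) '' Icc 0 t) with hSdef
  have hWS : ∀ s ∈ Icc (0:ℝ) t, |W s| ≤ S := by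
    intro s hs
    exact le_csSup (isCompact_Icc.image_of_continuousOn
      ((hWc.mono hsub).abs)).bddAbove ⟨s, hs, rfl⟩
  have hS0 : 0 ≤ S := by
    have := hWS 0 ⟨le_rfl, ht0⟩
    rw [hW0, abs_zero] at this
    exact this
  -- constants
  set K := 2 * Real.sqrt t / κ * Real.sqrt (κ' - κ) with hKdef
  have hK0 : 0 ≤ K := by positivity
  -- inner integral bound
  have hIs : ∀ s ∈ Icc (0:ℝ) t,
      |∫ u in (0:ℝ)..s, (X u - Xs u) / (Xs u * X u)| ≤ K / C * s := by
    intro s hs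
    have h := intervalIntegral.norm_integral_le_of_norm_le_const
      (C := K / C) (f := fun u => (X u - Xs u) / (Xs u * X u)) (a := (0:ℝ)) (b := s) ?_
    · rw [Real.norm_eq_abs] at h
      calc |∫ u in (0:ℝ)..s, (X u - Xs u) / (Xs u * X u)| ≤ K / C * |s - 0| := h
        _ = K / C * s := by rw [sub_zero, abs_of_nonneg hs.1]
    · intro u hu
      have hu' : u ∈ Icc (0:ℝ) t := by
        rw [uIoc_of_le hs.1] at hu
        exact ⟨hu.1.le, hu.2.trans hs.2⟩
      rw [Real.norm_eq_abs, abs_div, abs_of_pos (hXXpos u hu')]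
      have hnum : |X u - Xs u| ≤ K := by
        rw [abs_sub_comm]
        exact hsup t htt u hu'
      exact div_le_div₀ hK0 hnum hC (hCle u hu')
  set A := ((κ' - κ) * a + (κ' - κ) * S) / (κ' * κ * C) with hAdef
  set B := 4 * (K / C) / (κ' * κ * C) with hBdef
  -- pointwise bound on main integrand
  have hfb : ∀ s ∈ Icc (0:ℝ) t,
      |(κ' * Xs s - κ * X s) / (κ' * κ * (Xs s * X s))| ≤ A + B * s := by
    intro s hs
    have hDpos : 0 < κ' * κ * (Xs s * X s) := mul_pos hκκ (hXXpos s hs)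
    rw [abs_div, abs_of_pos hDpos]
    have hnum : |κ' * Xs s - κ * X s| ≤ (κ' - κ) * a + 4 * (K / C * s) + (κ' - κ) * S := by
      rw [heq s (hsub hs)]
      have h1 : |(κ' - κ) * a| = (κ' - κ) * a := abs_of_pos (mul_pos hd ha)
      have h2 : |4 * (∫ u in (0:ℝ)..s, (X u - Xs u) / (Xs u * X u))| ≤ 4 * (K / C * s) := by
        rw [abs_mul, abs_of_nonneg (by norm_num : (0:ℝ) ≤ 4)]
        have := hIs s hs
        linarith
      have h3 : |(κ' - κ) * W s| ≤ (κ' - κ) * S := by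
        rw [abs_mul, abs_of_pos hd]
        exact mul_le_mul_of_nonneg_left (hWS s hs) hd.le
      calc |(κ' - κ) * a + 4 * (∫ u in (0:ℝ)..s, (X u - Xs u) / (Xs u * X u)) + (κ' - κ) * W s|
          ≤ |(κ' - κ) * a + 4 * (∫ u in (0:ℝ)..s, (X u - Xs u) / (Xs u * X u))| + |(κ' - κ) * W s| :=
            abs_add_le _ _
        _ ≤ |(κ' - κ) * a| + |4 * (∫ u in (0:ℝ)..s, (X u - Xs u) / (Xs u * X u))| + |(κ' - κ) * W s| := by
            have := abs_add_le ((κ' - κ) * a) (4 * (∫ u in (0:ℝ)..s, (X u - Xs u) / (Xs u * X u)))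
            linarith
        _ ≤ (κ' - κ) * a + 4 * (K / C * s) + (κ' - κ) * S := by rw [h1]; linarith
    have hNnn : 0 ≤ (κ' - κ) * a + 4 * (K / C * s) + (κ' - κ) * S := by
      have : 0 ≤ K / C * s := mul_nonneg (div_nonneg hK0 hC.le) hs.1
      nlinarith [mul_pos hd ha, mul_nonneg hd.le hS0]
    have hstep : |κ' * Xs s - κ * X s| / (κ' * κ * (Xs s * X s))
        ≤ ((κ' - κ) * a + 4 * (K / C * s) + (κ' - κ) * S) / (κ' * κ * C) :=
      div_le_div₀ hNnn hnum (mul_pos hκκ hC)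
        (mul_le_mul_of_nonneg_left (hCle s hs) hκκ.le)
    refine hstep.trans (le_of_eq ?_)
    rw [hAdef, hBdef]
    field_simp
    ring
  -- integrability of main integrand
  have hfc : ContinuousOn (fun s => (κ' * Xs s - κ * X s) / (κ' * κ * (Xs s * X s))) (Icc 0 t) := by
    apply ContinuousOn.div
    · exact (continuousOn_const.mul hXsc').sub (continuousOn_const.mul hXc')
    · exact continuousOn_const.mul (hXsc'.mul hXc')
    · intro s hs
      exact (mul_pos hκκ (hXXpos s hs)).ne'
  have hfi : IntervalIntegrable (fun s => (κ' * Xs s - κ * X s) / (κ' * κ * (Xs s * X s)))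
      volume 0 t := by
    rw [intervalIntegrable_iff_integrableOn_Icc_of_le ht0]
    exact hfc.integrableOn_compact isCompact_Icc
  have hgi : IntervalIntegrable (fun s => A + B * s) volume 0 t :=
    (continuous_const.add (continuous_const.mul continuous_id)).intervalIntegrable 0 t
  -- the main chain
  have h1 : |∫ s in (0:ℝ)..t, (κ' * Xs s - κ * X s) / (κ' * κ * (Xs s * X s))|
      ≤ ∫ s in (0:ℝ)..t, |(κ' * Xs s - κ * X s) / (κ' * κ * (Xs s * X s))| := by
    have := intervalIntegral.norm_integral_le_integral_norm (μ := volume)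
      (f := fun s => (κ' * Xs s - κ * X s) / (κ' * κ * (Xs s * X s))) (a := (0:ℝ)) (b := t) ht0
    simpa only [Real.norm_eq_abs] using this
  have h2 : (∫ s in (0:ℝ)..t, |(κ' * Xs s - κ * X s) / (κ' * κ * (Xs s * X s))|)
      ≤ ∫ s in (0:ℝ)..t, (A + B * s) :=
    intervalIntegral.integral_mono_on ht0 hfi.abs hgi hfb
  have h3 : (∫ s in (0:ℝ)..t, (A + B * s)) = A * t + B * (t ^ 2 / 2) := by
    have hi2 : IntervalIntegrable (fun s : ℝ => B * s) volume 0 t :=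
      (continuous_const.mul continuous_id').intervalIntegrable 0 t
    rw [intervalIntegral.integral_add intervalIntegrable_const hi2]
    have : (∫ s in (0:ℝ)..t, B * s) = B * (t ^ 2 / 2) := by
      rw [intervalIntegral.integral_const_mul]
      simp [integral_id]
    rw [this, intervalIntegral.integral_const, smul_eq_mul, sub_zero]
    ring
  -- rpow identity
  have hrt : t ^ ((5:ℝ)/2) = t ^ 2 * Real.sqrt t := by
    rw [Real.sqrt_eq_rpow, show ((5:ℝ)/2) = ((2:ℕ):ℝ) + 1/2 by norm_num,
      Real.rpow_add htpos, Real.rpow_natCast]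
  -- final algebra
  have hkey : 2 * (A * t + B * (t ^ 2 / 2))
      = (κ' - κ) * (2 * a / (κ' * κ)) * t / C
        + Real.sqrt (κ' - κ) * (8 / (κ' * κ ^ 2)) * (t ^ 2 * Real.sqrt t) / C ^ 2
        + (κ' - κ) * (2 / (κ' * κ)) * (t / C) * S := by
    rw [hAdef, hBdef, hKdef]
    field_simp
    ring
  have hterm2 : Real.sqrt (κ' - κ) * (8 / (κ' * κ ^ 2)) * (t ^ 2 * Real.sqrt t) / C ^ 2
      ≤ Real.sqrt (κ' - κ) * (16 / (κ' * κ ^ 2)) * (t ^ 2 * Real.sqrt t) / C ^ 2 := by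
    have h8 : (0:ℝ) ≤ Real.sqrt (κ' - κ) * (t ^ 2 * Real.sqrt t) / C ^ 2 := by positivity
    have : (8:ℝ) / (κ' * κ ^ 2) ≤ 16 / (κ' * κ ^ 2) := by
      apply div_le_div_of_nonneg_right (by norm_num) (by positivity)
    calc Real.sqrt (κ' - κ) * (8 / (κ' * κ ^ 2)) * (t ^ 2 * Real.sqrt t) / C ^ 2
        = 8 / (κ' * κ ^ 2) * (Real.sqrt (κ' - κ) * (t ^ 2 * Real.sqrt t) / C ^ 2) := by ring
      _ ≤ 16 / (κ' * κ ^ 2) * (Real.sqrt (κ' - κ) * (t ^ 2 * Real.sqrt t) / C ^ 2) :=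
          mul_le_mul_of_nonneg_right this h8
      _ = Real.sqrt (κ' - κ) * (16 / (κ' * κ ^ 2)) * (t ^ 2 * Real.sqrt t) / C ^ 2 := by ring
  rw [hrt]
  calc 2 * |∫ s in (0:ℝ)..t, (κ' * Xs s - κ * X s) / (κ' * κ * (Xs s * X s))|
      ≤ 2 * (A * t + B * (t ^ 2 / 2)) := by
        rw [← h3] at *
        linarith
    _ ≤ _ := by rw [hkey]; linarith
end
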